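/- For every integer n ≥ 1, Pr(P ≥ n+2) = 1/2 - (1/2^(2n+1))·C(2n,n) - (1/2^(2n))·C(2n,n+1), where P is a binomial random variable with parameters 2n and 1/2. -/

import Mathlib

lemma refl_sum (n : ℕ) : ∑ k ∈ Finset.Icc (n+1) (2*n), (2*n).choose k
    = ∑ k ∈ Finset.range n, (2*n).choose k := by
  refine Finset.sum_nbij' (fun k => 2*n - k) (fun k => 2*n - k) ?_ ?_ ?_ ?_ ?_
  · intro a ha
    simp only [Finset.mem_Icc] at ha
    simp only [Finset.mem_range]
    omega
  · intro a ha
    simp only [Finset.mem_range] at ha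
    simp only [Finset.mem_Icc]
    omega
  · intro a ha; simp only [Finset.mem_Icc] at ha; omega
  · intro a ha; simp only [Finset.mem_range] at ha; omega
  · intro a ha
    simp only [Finset.mem_Icc] at ha
    exact (Nat.choose_symm (by omega)).symm

lemma key (n : ℕ) : 2 * (∑ k ∈ Finset.Icc (n+1) (2*n), (2*n).choose k) + (2*n).choose n
    = 2^(2*n) := by
  have h2 : ∑ k ∈ Finset.range (2*n+1), (2*n).choose k = 2^(2*n) := Nat.sum_range_choose _
  have hsplit : ∑ k ∈ Finset.range (2*n+1), (2*n).choose k
      = (∑ k ∈ Finset.range n, (2*n).choose k) + (2*n).choose n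
        + ∑ k ∈ Finset.Icc (n+1) (2*n), (2*n).choose k := by
    rw [Finset.range_eq_Ico, ← Finset.sum_Ico_consecutive _ (Nat.zero_le n) (by omega),
      Finset.sum_eq_sum_Ico_succ_bot (by omega : n < 2*n+1), ← Finset.Ico_add_one_right_eq_Icc (n+1) (2*n),
      ← Finset.range_eq_Ico]
    ring
  rw [refl_sum] at hsplit ⊢
  omega

/-- For every integer `n ≥ 1`, if `P ~ Binomial(2n, 1/2)`, then
`Pr(P ≥ n+2) = 1/2 - (1/2^(2n+1)) * C(2n, n) - (1/2^(2n)) * C(2n, n+1)`. -/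
theorem binomial_half_ge_succ_succ (n : ℕ) (hn : 1 ≤ n) :
    ∑ k ∈ Finset.Icc (n + 2) (2 * n), ((2 * n).choose k : ℝ) / 2 ^ (2 * n)
      = 1 / 2 - (1 / 2 ^ (2 * n + 1)) * ((2 * n).choose n : ℝ)
        - (1 / 2 ^ (2 * n)) * ((2 * n).choose (n + 1) : ℝ) := by
  have hins : Finset.Icc (n+1) (2*n) = insert (n+1) (Finset.Icc (n+2) (2*n)) := by
    ext x; simp only [Finset.mem_Icc, Finset.mem_insert]; omega
  have hkR : (2:ℝ) * (∑ k ∈ Finset.Icc (n+1) (2*n), ((2*n).choose k : ℝ)) + (2*n).choose n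
      = 2^(2*n) := by exact_mod_cast key n
  have hsum : (∑ k ∈ Finset.Icc (n+1) (2*n), ((2*n).choose k : ℝ))
      = (∑ k ∈ Finset.Icc (n+2) (2*n), ((2*n).choose k : ℝ)) + (2*n).choose (n+1) := by
    rw [hins, Finset.sum_insert (by simp)]
    ring
  have hS : (∑ k ∈ Finset.Icc (n+2) (2*n), ((2*n).choose k : ℝ))
      = 2^(2*n)/2 - ((2*n).choose n : ℝ)/2 - (2*n).choose (n+1) := by
    rw [hsum] at hkR; linarith
  rw [← Finset.sum_div, hS, pow_succ]
  have hpos : (0:ℝ) < 2 ^ (2*n) := by positivity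
  field_simp
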